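/- The number of binary trees with n labeled nodes such that every right node v (a non-root node that is the second child of its parent) satisfies parent(v) > v equals (n+1)^(n-1). -/

import Mathlib

/-- Binary trees: each node has a label and exactly two children (each a node or a leaf). -/
inductive BTree : Type
  | leaf : BTree
  | node (label : ℕ) (l r : BTree) : BTree

/-- Node labels in prefix order. -/
def BTree.labels : BTree → List ℕ
  | .leaf => []
  | .node a l r => a :: (l.labels ++ r.labels)

/-- Every right node `v` (a non-root node which is the second child of its parent `u`)
satisfies `u > v`. -/
def BTree.rightDesc : BTree → Prop
  | .leaf => True
  | .node a l r => l.rightDesc ∧ r.rightDesc ∧ ∀ b x y, r = .node b x y → b < a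

namespace BTreeAux

def mlabels (T : BTree) : Multiset ℕ := ↑T.labels

@[simp] lemma mlabels_leaf : mlabels .leaf = 0 := rfl

@[simp] lemma mlabels_node (a : ℕ) (l r : BTree) :
    mlabels (.node a l r) = a ::ₘ (mlabels l + mlabels r) := by
  simp [mlabels, BTree.labels]

def chain : List (ℕ × BTree) → BTree
  | [] => .leaf
  | (a, l) :: rest => .node a l (chain rest)

@[simp] lemma chain_nil : chain [] = .leaf := rfl
@[simp] lemma chain_cons (a : ℕ) (l : BTree) (L : List (ℕ × BTree)) :
    chain ((a, l) :: L) = .node a l (chain L) := rfl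

def spine : BTree → List (ℕ × BTree)
  | .leaf => []
  | .node a l r => (a, l) :: spine r

@[simp] lemma spine_chain (L : List (ℕ × BTree)) : spine (chain L) = L := by
  induction L with
  | nil => rfl
  | cons p L ih => cases p; simp [chain, spine, ih]

@[simp] lemma chain_spine (T : BTree) : chain (spine T) = T := by
  induction T with
  | leaf => rfl
  | node a l r ihl ihr => simp [spine, chain, ihr]

lemma chain_injective : Function.Injective chain := by
  intro L M h
  rw [← spine_chain L, h, spine_chain]

lemma rightDesc_chain (L : List (ℕ × BTree)) :
    (chain L).rightDesc ↔
      L.Chain' (fun p q => q.1 < p.1) ∧ ∀ p ∈ L, p.2.rightDesc := by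
  induction L with
  | nil => simp [BTree.rightDesc, List.Chain']
  | cons p L ih =>
    obtain ⟨a, l⟩ := p
    rw [chain_cons]
    show l.rightDesc ∧ (chain L).rightDesc ∧ _ ↔ _
    rw [ih]
    cases L with
    | nil => simp [chain, List.Chain']
    | cons q M =>
      obtain ⟨b, m⟩ := q
      constructor
      · rintro ⟨h1, ⟨h2, h3⟩, h4⟩
        refine ⟨List.IsChain.cons_cons ?_ h2, ?_⟩
        · exact h4 b m (chain M) rfl
        · rintro p hp
          rcases List.mem_cons.mp hp with h | hp'
          · simpa [h]
          · exact h3 p hp'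
      · rintro ⟨h1, h2⟩
        rw [List.Chain', List.isChain_cons_cons] at h1
        refine ⟨h2 (a, l) (by simp), ⟨h1.2, fun p hp => h2 p (List.mem_cons_of_mem _ hp)⟩, ?_⟩
        rintro b' x y hb
        rw [chain_cons] at hb
        cases hb
        exact h1.1

lemma mlabels_chain (L : List (ℕ × BTree)) :
    mlabels (chain L) = ↑(L.map Prod.fst) + (L.map (fun p => mlabels p.2)).sum := by
  induction L with
  | nil => simp
  | cons p L ih =>
    obtain ⟨a, l⟩ := p
    simp only [chain_cons, mlabels_node, ih, List.map_cons, List.sum_cons]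
    rw [← Multiset.cons_coe]
    push_cast
    rw [← Multiset.singleton_add, ← Multiset.singleton_add]
    abel

end BTreeAux

namespace BTreeAux

open Finset

section Count

variable {ι : Type} [Fintype ι] [DecidableEq ι]

lemma filterMap_eq_map' {α β : Type*} (M : Multiset α) (g : α → Option β) (w : α → β)
    (h : ∀ x ∈ M, g x = some (w x)) : M.filterMap g = M.map w := by
  induction M using Multiset.induction_on with
  | empty => simp
  | cons a t ih =>
    rw [Multiset.filterMap_cons_some _ _ _ (h a (Multiset.mem_cons_self a t)),
      Multiset.map_cons, ih (fun x hx => h x (Multiset.mem_cons_of_mem hx))]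

lemma sum_filterMap_fiber {α β : Type*} (M : Multiset α) (c : α → ι) (u : α → β) :
    ∑ i : ι, M.filterMap (fun p => if c p = i then some (u p) else none) = M.map u := by
  induction M using Multiset.induction_on with
  | empty => simp
  | cons a t ih =>
    have step : ∀ i : ι, Multiset.filterMap (fun p => if c p = i then some (u p) else none) (a ::ₘ t)
        = (if c a = i then ({u a} : Multiset β) else 0)
          + Multiset.filterMap (fun p => if c p = i then some (u p) else none) t := by
      intro i
      by_cases h : c a = i
      · rw [Multiset.filterMap_cons_some _ _ _ (show _ = some (u a) by simp [h]), if_pos h]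
        rw [← Multiset.singleton_add]
      · rw [Multiset.filterMap_cons_none _ _ (by simp [h]), if_neg h, zero_add]
    rw [Finset.sum_congr rfl (fun i _ => step i), Finset.sum_add_distrib, ih,
      Finset.sum_ite_eq, if_pos (Finset.mem_univ _), Multiset.map_cons,
      Multiset.singleton_add]

def Lall (K : Finset ℕ) (f : {a // a ∈ K} → ι × BTree) : List (ℕ × ι × BTree) :=
  (K.sort (· ≤ ·)).reverse.filterMap fun a => if h : a ∈ K then some (a, f ⟨a, h⟩) else none

def slotList (K : Finset ℕ) (f : {a // a ∈ K} → ι × BTree) (i : ι) : List (ℕ × BTree) :=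
  (Lall K f).filterMap fun p => if p.2.1 = i then some (p.1, p.2.2) else none

lemma coe_Lall (K : Finset ℕ) (f : {a // a ∈ K} → ι × BTree) :
    (↑(Lall K f) : Multiset (ℕ × ι × BTree))
      = Multiset.map (fun a : {a // a ∈ K} => ((a : ℕ), f a)) (Finset.univ : Finset {a // a ∈ K}).val := by
  rw [Lall, ← Multiset.filterMap_coe, Multiset.coe_reverse, Finset.sort_eq]
  rw [Finset.univ_eq_attach, Finset.attach_val]
  conv_lhs => rw [← Multiset.attach_map_val K.val]
  rw [Multiset.filterMap_map,
    filterMap_eq_map' _ _ (fun x : {x // x ∈ K.val} => ((x : ℕ), f ⟨x.1, x.2⟩))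
      (fun x _ => by rw [Function.comp_apply, dif_pos (show (x : ℕ) ∈ K from x.2)])]
  rfl

lemma coe_slotList (K : Finset ℕ) (f : {a // a ∈ K} → ι × BTree) (i : ι) :
    (↑(slotList K f i) : Multiset (ℕ × BTree))
      = Multiset.filterMap
          (fun a : {a // a ∈ K} => if (f a).1 = i then some ((a : ℕ), (f a).2) else none)
          (Finset.univ : Finset {a // a ∈ K}).val := by
  rw [slotList, ← Multiset.filterMap_coe, coe_Lall, Multiset.filterMap_map]
  rfl

lemma coe_slotList' (K : Finset ℕ) (f : {a // a ∈ K} → ι × BTree) (i : ι) :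
    (↑(slotList K f i) : Multiset (ℕ × BTree))
      = Multiset.map (fun a : {a // a ∈ K} => ((a : ℕ), (f a).2))
          (Finset.univ.filter (fun a => (f a).1 = i)).val := by
  rw [coe_slotList, Finset.filter_val, ← Multiset.filterMap_eq_map, Multiset.filterMap_filter]
  rfl

lemma sum_coe_slotList (K : Finset ℕ) (f : {a // a ∈ K} → ι × BTree) :
    ∑ i : ι, (↑(slotList K f i) : Multiset (ℕ × BTree))
      = Multiset.map (fun a : {a // a ∈ K} => ((a : ℕ), (f a).2))
          (Finset.univ : Finset {a // a ∈ K}).val := by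
  rw [Finset.sum_congr rfl (fun i _ => coe_slotList K f i)]
  exact sum_filterMap_fiber _ (fun a => (f a).1) (fun a => ((a : ℕ), (f a).2))

lemma mem_slotList {K : Finset ℕ} {f : {a // a ∈ K} → ι × BTree} {i : ι} {p : ℕ × BTree} :
    p ∈ slotList K f i ↔ ∃ a : {a // a ∈ K}, (f a).1 = i ∧ p = ((a : ℕ), (f a).2) := by
  rw [← Multiset.mem_coe, coe_slotList, Multiset.mem_filterMap]
  constructor
  · rintro ⟨a, -, ha⟩
    by_cases h : (f a).1 = i
    · rw [if_pos h] at ha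
      exact ⟨a, h, (Option.some_injective _ ha).symm⟩
    · rw [if_neg h] at ha; cases ha
  · rintro ⟨a, h, rfl⟩
    exact ⟨a, Multiset.mem_attach _ _, by rw [if_pos h]⟩

lemma sublist_fst (l : List ℕ) (g : ℕ → Option (ℕ × BTree))
    (h : ∀ x p, g x = some p → p.1 = x) : ((l.filterMap g).map Prod.fst).Sublist l := by
  induction l with
  | nil => simp
  | cons x l ih =>
    rw [List.filterMap_cons]
    cases hg : g x with
    | none => exact ih.cons x
    | some p =>
      rw [List.map_cons, h x p hg]
      exact ih.cons₂ x

lemma pairwise_slotList (K : Finset ℕ) (f : {a // a ∈ K} → ι × BTree) (i : ι) :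
    (slotList K f i).Pairwise (fun p q => q.1 < p.1) := by
  have hs : ((K.sort (· ≤ ·)).reverse).Pairwise (· > ·) := by
    rw [List.pairwise_reverse]
    exact (Finset.sortedLT_sort K).pairwise
  have : slotList K f i = (K.sort (· ≤ ·)).reverse.filterMap
      (fun a => ((if h : a ∈ K then some (a, f ⟨a, h⟩) else none).bind
        (fun p => if p.2.1 = i then some (p.1, p.2.2) else none))) := by
    rw [slotList, Lall, List.filterMap_filterMap]
  refine List.Pairwise.of_map (S := fun x y : ℕ => x > y) Prod.fst (fun a b h => h) ?_
  refine List.Pairwise.sublist ?_ hs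
  rw [this]
  apply sublist_fst
  intro x p hp
  by_cases h : x ∈ K
  · rw [dif_pos h] at hp
    rw [Option.bind_some] at hp
    by_cases h2 : (f ⟨x, h⟩).1 = i
    · rw [if_pos h2] at hp
      cases hp; rfl
    · rw [if_neg h2] at hp; cases hp
  · rw [dif_neg h] at hp; cases hp

def TS (ι : Type) [Fintype ι] (s : Finset ℕ) : Type :=
  {v : ι → BTree // (∀ i, (v i).rightDesc) ∧ ∑ i, mlabels (v i) = s.val}

def Mid (ι : Type) [Fintype ι] [DecidableEq ι] (s : Finset ℕ) : Type :=
  Σ K : {K : Finset ℕ // K ∈ s.powerset},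
    {f : {a // a ∈ K.1} → ι × BTree //
      (∀ a, (f a).2.rightDesc) ∧
        ∑ a : {a // a ∈ K.1}, mlabels (f a).2 = (s \ K.1).val}

lemma multiset_map_sum {α β γ : Type*} (t : Finset γ) (F : γ → Multiset α) (g : α → β) :
    (∑ i ∈ t, F i).map g = ∑ i ∈ t, (F i).map g := by
  classical
  induction t using Finset.induction_on with
  | empty => simp
  | insert _ _ hx ih => rw [Finset.sum_insert hx, Finset.sum_insert hx, Multiset.map_add, ih]

lemma multiset_sum_sum {α γ : Type*} [AddCommMonoid α] (t : Finset γ) (F : γ → Multiset α) :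
    (∑ i ∈ t, F i).sum = ∑ i ∈ t, (F i).sum := by
  classical
  induction t using Finset.induction_on with
  | empty => simp
  | insert _ _ hx ih => rw [Finset.sum_insert hx, Finset.sum_insert hx, Multiset.sum_add, ih]

lemma multiset_filter_sum {α γ : Type*} (t : Finset γ) (F : γ → Multiset α)
    (p : α → Prop) [DecidablePred p] :
    (∑ i ∈ t, F i).filter p = ∑ i ∈ t, (F i).filter p := by
  classical
  induction t using Finset.induction_on with
  | empty => simp
  | insert _ _ hx ih => rw [Finset.sum_insert hx, Finset.sum_insert hx, Multiset.filter_add, ih]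

lemma mlabels_chain' (L : List (ℕ × BTree)) :
    mlabels (chain L) = (↑L : Multiset (ℕ × BTree)).map Prod.fst
      + ((↑L : Multiset (ℕ × BTree)).map (fun p => mlabels p.2)).sum := by
  rw [mlabels_chain]
  rfl

/-- The backward map from `Mid` to `TS`. -/
def psi (s : Finset ℕ) (m : Mid ι s) : TS ι s := by
  refine ⟨fun i => chain (slotList m.1.1 m.2.1 i), fun i => ?_, ?_⟩
  · rw [rightDesc_chain]
    constructor
    · exact (pairwise_slotList _ _ _).isChain
    · intro p hp
      obtain ⟨a, -, rfl⟩ := mem_slotList.mp hp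
      exact m.2.2.1 a
  · have hme : m.1.1 ∈ s.powerset := m.1.2
    have hsub : m.1.1 ⊆ s := Finset.mem_powerset.mp hme
    have h2 := sum_coe_slotList m.1.1 m.2.1
    have step1 : ∑ i, mlabels (chain (slotList m.1.1 m.2.1 i))
        = (∑ i, (↑(slotList m.1.1 m.2.1 i) : Multiset (ℕ × BTree))).map Prod.fst
          + ((∑ i, (↑(slotList m.1.1 m.2.1 i) : Multiset (ℕ × BTree))).map
              (fun p => mlabels p.2)).sum := by
      rw [multiset_map_sum, multiset_map_sum, multiset_sum_sum, ← Finset.sum_add_distrib]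
      exact Finset.sum_congr rfl (fun i _ => mlabels_chain' _)
    rw [step1, h2, Multiset.map_map, Multiset.map_map]
    have hfst : Multiset.map ((fun p : ℕ × BTree => p.1) ∘ (fun a : {a // a ∈ m.1.1} => ((a : ℕ), (m.2.1 a).2)))
        (Finset.univ : Finset {a // a ∈ m.1.1}).val = m.1.1.val := by
      exact Multiset.attach_map_val _
    have hsnd : (Multiset.map ((fun p : ℕ × BTree => mlabels p.2) ∘ (fun a : {a // a ∈ m.1.1} => ((a : ℕ), (m.2.1 a).2)))
        (Finset.univ : Finset {a // a ∈ m.1.1}).val).sum = (s \ m.1.1).val := by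
      exact m.2.2.2
    rw [hfst, hsnd, Finset.sdiff_val]
    exact add_tsub_cancel_of_le (Finset.val_le_iff.mpr hsub)


lemma psi_injective (s : Finset ℕ) : Function.Injective (psi (ι := ι) s) := by
  rintro ⟨⟨K1, hK1⟩, ⟨f1, hf1⟩⟩ ⟨⟨K2, hK2⟩, ⟨f2, hf2⟩⟩ h
  have hslots : ∀ i, slotList K1 f1 i = slotList K2 f2 i := by
    intro i
    apply chain_injective
    exact congrFun (congrArg Subtype.val h) i
  have hsum : Multiset.map (fun a : {a // a ∈ K1} => ((a : ℕ), (f1 a).2))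
        (Finset.univ : Finset {a // a ∈ K1}).val
      = Multiset.map (fun a : {a // a ∈ K2} => ((a : ℕ), (f2 a).2))
        (Finset.univ : Finset {a // a ∈ K2}).val := by
    rw [← sum_coe_slotList, ← sum_coe_slotList]
    exact Finset.sum_congr rfl (fun i _ => by rw [hslots i])
  have hKv : K1.val = K2.val := by
    have := congrArg (Multiset.map Prod.fst) hsum
    rw [Multiset.map_map, Multiset.map_map] at this
    calc K1.val = Multiset.map (Prod.fst ∘ fun a : {a // a ∈ K1} => ((a : ℕ), (f1 a).2))
          (Finset.univ : Finset {a // a ∈ K1}).val := (Multiset.attach_map_val _).symm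
      _ = Multiset.map (Prod.fst ∘ fun a : {a // a ∈ K2} => ((a : ℕ), (f2 a).2))
          (Finset.univ : Finset {a // a ∈ K2}).val := this
      _ = K2.val := Multiset.attach_map_val _
  have hK : K1 = K2 := Finset.val_injective hKv
  subst hK
  have hf : f1 = f2 := by
    funext a
    have h1 : ((a : ℕ), (f1 a).2) ∈ slotList K1 f1 (f1 a).1 :=
      mem_slotList.mpr ⟨a, rfl, rfl⟩
    rw [hslots ((f1 a).1)] at h1
    obtain ⟨b, hb1, hb2⟩ := mem_slotList.mp h1
    have hab : a = b := Subtype.ext (congrArg Prod.fst hb2)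
    subst hab
    rw [Prod.mk.injEq] at hb2
    exact Prod.ext hb1.symm hb2.2
  subst hf
  rfl

lemma psi_surjective (s : Finset ℕ) : Function.Surjective (psi (ι := ι) s) := by
  rintro ⟨v, hd, hsum⟩
  classical
  set M : Multiset (ℕ × ι × BTree) :=
    ∑ i : ι, (↑((spine (v i)).map (fun p => (p.1, i, p.2))) : Multiset (ℕ × ι × BTree)) with hM
  have memM : ∀ p : ℕ × ι × BTree, p ∈ M ↔ (p.1, p.2.2) ∈ spine (v p.2.1) := by
    intro p
    rw [hM, Multiset.mem_sum]
    constructor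
    · rintro ⟨i, -, hp⟩
      rw [Multiset.mem_coe, List.mem_map] at hp
      obtain ⟨q, hq, rfl⟩ := hp
      exact hq
    · intro hp
      exact ⟨p.2.1, Finset.mem_univ _, by
        rw [Multiset.mem_coe, List.mem_map]
        exact ⟨(p.1, p.2.2), hp, rfl⟩⟩
  have claimA : M.map Prod.fst + (M.map (fun p => mlabels p.2.2)).sum = s.val := by
    rw [← hsum, multiset_map_sum, multiset_map_sum, multiset_sum_sum, ← Finset.sum_add_distrib]
    refine Finset.sum_congr rfl (fun i _ => ?_)
    conv_rhs => rw [← chain_spine (v i), mlabels_chain' (spine (v i))]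
    rw [Multiset.map_coe, Multiset.map_coe, Multiset.map_coe, List.map_map, List.map_map]
    rfl
  have hle : M.map Prod.fst ≤ s.val := by
    rw [← claimA]; exact le_add_right le_rfl
  have hnodup : (M.map Prod.fst).Nodup := Multiset.nodup_of_le hle s.nodup
  set K : Finset ℕ := ⟨M.map Prod.fst, hnodup⟩ with hKdef
  have hKs : K ∈ s.powerset := Finset.mem_powerset.mpr (Finset.val_le_iff.mp hle)
  have hexists : ∀ a : {a // a ∈ K}, ∃ q : ι × BTree, ((a : ℕ), q) ∈ M := by
    rintro ⟨a, ha⟩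
    have : a ∈ M.map Prod.fst := ha
    rw [Multiset.mem_map] at this
    obtain ⟨p, hp, hp2⟩ := this
    exact ⟨p.2, by rwa [show ((a : ℕ), p.2) = p from Prod.ext hp2.symm rfl]⟩
  set f : {a // a ∈ K} → ι × BTree := fun a => Classical.choose (hexists a) with hfdef
  have hfM : ∀ a : {a // a ∈ K}, ((a : ℕ), f a) ∈ M := fun a => Classical.choose_spec (hexists a)
  have injM : ∀ p ∈ M, ∀ q ∈ M, Prod.fst p = Prod.fst q → p = q :=
    Multiset.inj_on_of_nodup_map hnodup
  -- the graph equality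
  have hG : Multiset.map (fun a : {a // a ∈ K} => ((a : ℕ), f a))
      (Finset.univ : Finset {a // a ∈ K}).val = M := by
    have hnodupG : (Multiset.map (fun a : {a // a ∈ K} => ((a : ℕ), f a))
        (Finset.univ : Finset {a // a ∈ K}).val).Nodup := by
      have : (Multiset.map (Prod.fst ∘ fun a : {a // a ∈ K} => ((a : ℕ), f a))
          (Finset.univ : Finset {a // a ∈ K}).val).Nodup := by
        rw [show (Multiset.map (Prod.fst ∘ fun a : {a // a ∈ K} => ((a : ℕ), f a))
          (Finset.univ : Finset {a // a ∈ K}).val) = K.val from Multiset.attach_map_val _]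
        exact K.nodup
      rw [← Multiset.map_map] at this
      exact this.of_map _
    apply Multiset.eq_of_le_of_card_le
    · rw [Multiset.le_iff_count]
      intro p
      rcases Nat.eq_zero_or_pos (Multiset.count p (Multiset.map (fun a : {a // a ∈ K} => ((a : ℕ), f a))
          (Finset.univ : Finset {a // a ∈ K}).val)) with h0 | hpos
      · omega
      · have hmem : p ∈ Multiset.map (fun a : {a // a ∈ K} => ((a : ℕ), f a))
            (Finset.univ : Finset {a // a ∈ K}).val := by
          rw [← Multiset.count_pos]; exact hpos
      -- count ≤ 1 on LHS, ≥ 1 on RHS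
        have hc1 : Multiset.count p (Multiset.map (fun a : {a // a ∈ K} => ((a : ℕ), f a))
            (Finset.univ : Finset {a // a ∈ K}).val) ≤ 1 :=
          Multiset.nodup_iff_count_le_one.mp hnodupG p
        have hpM : p ∈ M := by
          rw [Multiset.mem_map] at hmem
          obtain ⟨a, -, rfl⟩ := hmem
          exact hfM a
        have : 1 ≤ Multiset.count p M := Multiset.one_le_count_iff_mem.mpr hpM
        omega
    · rw [Multiset.card_map]
      have h1 : (Finset.univ : Finset {a // a ∈ K}).val.card = K.card := by
        rw [show (Finset.univ : Finset {a // a ∈ K}).val.card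
            = (Finset.univ : Finset {a // a ∈ K}).card from rfl, Finset.card_univ]
        exact Fintype.card_coe K
      have h2 : M.card = K.card := by
        rw [show K.card = (M.map Prod.fst).card from rfl, Multiset.card_map]
      rw [h1, h2]
  -- rightDesc of the subtrees
  have hf1 : ∀ a : {a // a ∈ K}, (f a).2.rightDesc := by
    intro a
    have hm := (memM _).mp (hfM a)
    have := hd ((f a).1)
    rw [← chain_spine (v ((f a).1)), rightDesc_chain] at this
    exact this.2 _ hm
  -- label sum condition
  have huniv : ∀ (g : ℕ × ι × BTree → Multiset ℕ),
      (M.map g).sum = ∑ a : {a // a ∈ K}, g ((a : ℕ), f a) := by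
    intro g
    rw [← hG, Multiset.map_map]
    rfl
  have hf2 : ∑ a : {a // a ∈ K}, mlabels (f a).2 = (s \ K).val := by
    rw [Finset.sdiff_val]
    have := claimA
    rw [show M.map Prod.fst = K.val from rfl] at this
    rw [← huniv (fun p => mlabels p.2.2)]
    exact eq_tsub_of_add_eq (by rw [add_comm]; exact this)
  refine ⟨⟨⟨K, hKs⟩, ⟨f, hf1, hf2⟩⟩, ?_⟩
  apply Subtype.ext
  funext i
  show chain (slotList K f i) = v i
  rw [← chain_spine (v i)]
  congr 1
  -- slotList K f i = spine (v i)
  haveI : IsAntisymm (ℕ × BTree) (fun p q => q.1 < p.1) :=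
    ⟨fun a b h1 h2 => absurd h1 (lt_asymm h2)⟩
  haveI : IsTrans (ℕ × BTree) (fun p q => q.1 < p.1) :=
    ⟨fun a b c h1 h2 => lt_trans h2 h1⟩
  have hsorted1 : (slotList K f i).Pairwise (fun p q => q.1 < p.1) := pairwise_slotList K f i
  have hsorted2 : (spine (v i)).Pairwise (fun p q => q.1 < p.1) := by
    have := hd i
    rw [← chain_spine (v i), rightDesc_chain] at this
    exact List.isChain_iff_pairwise.mp this.1
  refine List.Perm.eq_of_pairwise' hsorted1 hsorted2 (Multiset.coe_eq_coe.mp ?_)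
  rw [coe_slotList']
  have hfil : M.filter (fun p => p.2.1 = i)
      = ↑((spine (v i)).map (fun p => (p.1, i, p.2))) := by
    rw [hM, multiset_filter_sum]
    rw [Finset.sum_eq_single i]
    · rw [Multiset.filter_coe, List.filter_eq_self.mpr]
      intro p hp
      rw [List.mem_map] at hp
      obtain ⟨q, -, rfl⟩ := hp
      simp
    · intro j _ hji
      rw [Multiset.filter_coe, List.filter_eq_nil_iff.mpr]
      · rfl
      · intro p hp
        rw [List.mem_map] at hp
        obtain ⟨q, -, rfl⟩ := hp
        simp [hji]
    · intro h
      exact absurd (Finset.mem_univ i) h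
  have hfil2 : M.filter (fun p => p.2.1 = i)
      = Multiset.map (fun a : {a // a ∈ K} => ((a : ℕ), f a))
          ((Finset.univ.filter (fun a : {a // a ∈ K} => (f a).1 = i)).val) := by
    rw [← hG, Finset.filter_val, Multiset.filter_map]
    rfl
  have := hfil2.symm.trans hfil
  have hmapped := congrArg (Multiset.map (fun p : ℕ × ι × BTree => (p.1, p.2.2))) this
  rw [Multiset.map_map, Multiset.map_coe, List.map_map] at hmapped
  rw [show ((fun p : ℕ × ι × BTree => (p.1, p.2.2)) ∘ (fun p : ℕ × BTree => (p.1, i, p.2)))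
      = id from funext (fun p => rfl), List.map_id] at hmapped
  rw [← hmapped]
  rfl

noncomputable def tsEquivMid (s : Finset ℕ) : TS ι s ≃ Mid ι s :=
  (Equiv.ofBijective (psi s) ⟨psi_injective s, psi_surjective s⟩).symm

def fiberEquiv (s K : Finset ℕ) :
    {f : {a // a ∈ K} → ι × BTree //
        (∀ a, (f a).2.rightDesc) ∧
          ∑ a : {a // a ∈ K}, mlabels (f a).2 = (s \ K).val}
      ≃ ({a // a ∈ K} → ι) × TS {a // a ∈ K} (s \ K) where
  toFun f := ⟨fun a => (f.1 a).1, ⟨fun a => (f.1 a).2, f.2⟩⟩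
  invFun gh := ⟨fun a => (gh.1 a, gh.2.1 a), gh.2.2⟩
  left_inv f := rfl
  right_inv gh := rfl

lemma mlabels_eq_zero {T : BTree} (h : mlabels T = 0) : T = .leaf := by
  cases T with
  | leaf => rfl
  | node a l r => simp at h

instance ts_subsingleton_of_isEmpty (ι : Type) [Fintype ι] [IsEmpty ι] (s : Finset ℕ) :
    Subsingleton (TS ι s) := by
  constructor
  rintro ⟨v, -⟩ ⟨w, -⟩
  apply Subtype.ext
  funext i
  exact isEmptyElim i

lemma isEmpty_TS_of_isEmpty (ι : Type) [Fintype ι] [IsEmpty ι] (s : Finset ℕ)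
    (hs : s ≠ ∅) : IsEmpty (TS ι s) := by
  constructor
  rintro ⟨v, -, hsum⟩
  apply hs
  apply Finset.val_injective
  rw [← hsum]
  simp [Finset.univ_eq_empty]

lemma ts_subsingleton_of_empty (ι : Type) [Fintype ι] (s : Finset ℕ) (hs : s = ∅) :
    Subsingleton (TS ι s) := by
  subst hs
  constructor
  rintro ⟨v, -, hv⟩ ⟨w, -, hw⟩
  apply Subtype.ext
  funext i
  have h1 : mlabels (v i) = 0 := by
    have : mlabels (v i) ≤ ∑ j, mlabels (v j) := Finset.single_le_sum
      (f := fun j => mlabels (v j)) (fun j _ => Multiset.zero_le _) (Finset.mem_univ i)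
    rw [hv] at this
    simpa using Multiset.le_zero.mp (by simpa using this)
  have h2 : mlabels (w i) = 0 := by
    have : mlabels (w i) ≤ ∑ j, mlabels (w j) := Finset.single_le_sum
      (f := fun j => mlabels (w j)) (fun j _ => Multiset.zero_le _) (Finset.mem_univ i)
    rw [hw] at this
    simpa using Multiset.le_zero.mp (by simpa using this)
  show v i = w i
  rw [mlabels_eq_zero h1, mlabels_eq_zero h2]

lemma nonempty_TS_of_empty (ι : Type) [Fintype ι] : Nonempty (TS ι ∅) := by
  refine ⟨⟨fun _ => .leaf, fun i => ?_, by simp⟩⟩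
  trivial

lemma finite_TS : ∀ (n : ℕ) (s : Finset ℕ), s.card ≤ n →
    ∀ (ι : Type) [Fintype ι] [DecidableEq ι], Finite (TS ι s) := by
  intro n
  induction n with
  | zero =>
    intro s hs ι _ _
    have : s = ∅ := Finset.card_eq_zero.mp (Nat.le_zero.mp hs)
    haveI := ts_subsingleton_of_empty ι s this
    exact Finite.of_subsingleton
  | succ n ih =>
    intro s hs ι _ _
    haveI : ∀ K : {K : Finset ℕ // K ∈ s.powerset},
        Finite ({f : {a // a ∈ K.1} → ι × BTree //
          (∀ a, (f a).2.rightDesc) ∧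
            ∑ a : {a // a ∈ K.1}, mlabels (f a).2 = (s \ K.1).val}) := by
      rintro ⟨K, hK⟩
      haveI : Finite (TS {a // a ∈ K} (s \ K)) := by
        by_cases hKe : K = ∅
        · subst hKe
          haveI : IsEmpty {a : ℕ // a ∈ (∅ : Finset ℕ)} := by
            constructor; rintro ⟨a, ha⟩; simp at ha
          haveI := ts_subsingleton_of_isEmpty {a : ℕ // a ∈ (∅ : Finset ℕ)} (s \ ∅)
          exact Finite.of_subsingleton
        · apply ih
          have hKs : K ⊆ s := Finset.mem_powerset.mp hK
          have h1 : (s \ K).card = s.card - K.card := Finset.card_sdiff_of_subset hKs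
          have h2 : 1 ≤ K.card := Finset.card_pos.mpr (Finset.nonempty_iff_ne_empty.mpr hKe)
          omega
      exact Finite.of_equiv _ (fiberEquiv s K).symm
    haveI : Finite (Mid ι s) := by unfold Mid; exact Finite.instSigma
    exact Finite.of_equiv _ (tsEquivMid (ι := ι) s).symm

lemma deriv_binomial (m x y : ℕ) :
    ∑ j ∈ Finset.range (m+1), j * (m.choose j) * x^j * y^(m-j)
      = m * x * (x+y)^(m-1) := by
  cases m with
  | zero => simp
  | succ t =>
    rw [Finset.sum_range_succ']
    have e1 : ∀ i ∈ Finset.range (t+1),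
        (i+1) * ((t+1).choose (i+1)) * x^(i+1) * y^(t+1-(i+1))
          = (t+1) * (x * (x^i * y^(t-i) * t.choose i)) := by
      intro i _
      have h := Nat.add_one_mul_choose_eq t i
      have h2 : t + 1 - (i + 1) = t - i := by omega
      rw [h2]
      calc (i+1) * ((t+1).choose (i+1)) * x^(i+1) * y^(t-i)
          = ((t+1).choose (i+1) * (i+1)) * x^(i+1) * y^(t-i) := by ring
        _ = ((t+1) * t.choose i) * x^(i+1) * y^(t-i) := by
            rw [← h]
        _ = (t+1) * (x * (x^i * y^(t-i) * t.choose i)) := by rw [pow_succ]; ring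
    rw [Finset.sum_congr rfl e1, ← Finset.mul_sum, ← Finset.mul_sum]
    have hb : (x + y)^t = ∑ i ∈ Finset.range (t+1), x^i * y^(t-i) * t.choose i := by
      have := add_pow x y t
      simpa using this
    rw [← hb]
    have : t + 1 - 1 = t := rfl
    rw [this]
    ring

lemma num_identity (m r : ℕ) (hm : 0 < m) :
    ∑ j ∈ Finset.range (m+1),
        (m.choose j) * (r^j * (if j = 0 then 0 else if j = m then 1 else j * m^(m-j-1)))
      = r * (m + r)^(m-1) := by
  apply Nat.eq_of_mul_eq_mul_left hm
  rw [Finset.mul_sum]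
  have e1 : ∀ j ∈ Finset.range (m+1),
      m * ((m.choose j) * (r^j * (if j = 0 then 0 else if j = m then 1 else j * m^(m-j-1))))
        = j * (m.choose j) * r^j * m^(m-j) := by
    intro j hj
    rw [Finset.mem_range] at hj
    rcases Nat.eq_zero_or_pos j with rfl | hj0
    · simp
    by_cases hjm : j = m
    · rw [if_neg (by omega), if_pos hjm, hjm, Nat.sub_self, pow_zero]
      ring
    · rw [if_neg (by omega), if_neg hjm]
      have hp : m^(m-j) = m^(m-j-1) * m := by
        rw [← pow_succ]
        congr 1
        omega
      rw [hp]
      ring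
  rw [Finset.sum_congr rfl e1, deriv_binomial m r m]
  rw [add_comm r m]
  ring

lemma nat_card_sigma {κ : Type} [Fintype κ] (β : κ → Type) [∀ i, Fintype (β i)] :
    Nat.card (Σ i, β i) = ∑ i, Nat.card (β i) := by
  rw [Nat.card_eq_fintype_card, Fintype.card_sigma]
  exact Finset.sum_congr rfl (fun i _ => (Nat.card_eq_fintype_card).symm)

lemma card_TS_empty (ι : Type) [Fintype ι] : Nat.card (TS ι ∅) = 1 := by
  haveI := ts_subsingleton_of_empty ι ∅ rfl
  obtain ⟨x⟩ := nonempty_TS_of_empty ι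
  haveI : Unique (TS ι ∅) := uniqueOfSubsingleton x
  exact Nat.card_unique

lemma card_TS : ∀ (n : ℕ) (s : Finset ℕ), s.card ≤ n →
    ∀ (ι : Type) [Fintype ι] [DecidableEq ι],
    Nat.card (TS ι s) = if s.card = 0 then 1 else
      (Fintype.card ι) * (s.card + Fintype.card ι)^(s.card - 1) := by
  intro n
  induction n with
  | zero =>
    intro s hs ι _ _
    have h0 : s = ∅ := Finset.card_eq_zero.mp (Nat.le_zero.mp hs)
    subst h0
    rw [if_pos Finset.card_empty]
    exact card_TS_empty ι
  | succ n ih =>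
    intro s hs ι _ _
    by_cases hs0 : s.card = 0
    · have h0 : s = ∅ := Finset.card_eq_zero.mp hs0
      subst h0
      rw [if_pos Finset.card_empty]
      exact card_TS_empty ι
    · rw [if_neg hs0]
      have hm : 0 < s.card := Nat.pos_of_ne_zero hs0
      -- finiteness instances
      haveI hfinfib : ∀ K : {K : Finset ℕ // K ∈ s.powerset},
          Finite ({f : {a // a ∈ K.1} → ι × BTree //
            (∀ a, (f a).2.rightDesc) ∧
              ∑ a : {a // a ∈ K.1}, mlabels (f a).2 = (s \ K.1).val}) := by
        rintro ⟨K, hK⟩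
        haveI : Finite (TS {a // a ∈ K} (s \ K)) := by
          by_cases hKe : K = ∅
          · subst hKe
            haveI : IsEmpty {a : ℕ // a ∈ (∅ : Finset ℕ)} := by
              constructor; rintro ⟨a, ha⟩; simp at ha
            haveI := ts_subsingleton_of_isEmpty {a : ℕ // a ∈ (∅ : Finset ℕ)} (s \ ∅)
            exact Finite.of_subsingleton
          · exact finite_TS (s \ K).card _ le_rfl _
        exact Finite.of_equiv _ (fiberEquiv s K).symm
      haveI ftfib : ∀ K : {K : Finset ℕ // K ∈ s.powerset},
          Fintype ({f : {a // a ∈ K.1} → ι × BTree //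
            (∀ a, (f a).2.rightDesc) ∧
              ∑ a : {a // a ∈ K.1}, mlabels (f a).2 = (s \ K.1).val}) :=
        fun K => Fintype.ofFinite _
      haveI : Fintype (Mid ι s) := by unfold Mid; infer_instance
      -- per-fiber cardinality
      have hfib : ∀ (K : Finset ℕ), K ∈ s.powerset →
          Nat.card ({f : {a // a ∈ K} → ι × BTree //
            (∀ a, (f a).2.rightDesc) ∧
              ∑ a : {a // a ∈ K}, mlabels (f a).2 = (s \ K).val})
          = (Fintype.card ι)^(K.card) * (if K.card = 0 then 0 else
              if K.card = s.card then 1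
              else K.card * (s.card)^(s.card - K.card - 1)) := by
        intro K hK
        have hKs : K ⊆ s := Finset.mem_powerset.mp hK
        rw [Nat.card_congr (fiberEquiv (ι := ι) s K), Nat.card_prod]
        have harrow : Nat.card ({a // a ∈ K} → ι) = (Fintype.card ι)^(K.card) := by
          rw [Nat.card_eq_fintype_card, Fintype.card_fun, Fintype.card_coe]
        rw [harrow]
        congr 1
        by_cases hKe : K = ∅
        · subst hKe
          rw [Finset.card_empty, if_pos rfl]
          haveI : IsEmpty {a : ℕ // a ∈ (∅ : Finset ℕ)} := by
            constructor; rintro ⟨a, ha⟩; simp at ha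
          haveI := isEmpty_TS_of_isEmpty {a : ℕ // a ∈ (∅ : Finset ℕ)} (s \ ∅)
            (by rw [Finset.sdiff_empty]; exact fun h => hs0 (by rw [h]; rfl))
          exact Nat.card_of_isEmpty
        · have hk1 : 1 ≤ K.card := Finset.card_pos.mpr (Finset.nonempty_iff_ne_empty.mpr hKe)
          have hkle : K.card ≤ s.card := Finset.card_le_card hKs
          have hsd : (s \ K).card = s.card - K.card := Finset.card_sdiff_of_subset hKs
          have hle : (s \ K).card ≤ n := by omega
          rw [ih (s \ K) hle, hsd, Fintype.card_coe]
          rw [if_neg (show ¬K.card = 0 by omega)]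
          by_cases hKm : K.card = s.card
          · rw [if_pos hKm, if_pos (show s.card - K.card = 0 by omega)]
          · rw [if_neg hKm, if_neg (show ¬(s.card - K.card = 0) by omega)]
            have h1 : s.card - K.card + K.card = s.card := by omega
            rw [h1]
      -- assemble
      have hMid : Nat.card (Mid ι s)
          = ∑ K : {K : Finset ℕ // K ∈ s.powerset},
              Nat.card ({f : {a // a ∈ K.1} → ι × BTree //
                (∀ a, (f a).2.rightDesc) ∧
                  ∑ a : {a // a ∈ K.1}, mlabels (f a).2 = (s \ K.1).val}) :=
        nat_card_sigma _
      rw [Nat.card_congr (tsEquivMid (ι := ι) s), hMid,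
        Finset.sum_congr rfl
          (fun (K : {K : Finset ℕ // K ∈ s.powerset}) _ => hfib K.1 K.2),
        Finset.sum_coe_sort s.powerset
          (fun K => (Fintype.card ι)^(K.card) * (if K.card = 0 then 0 else
            if K.card = s.card then 1
            else K.card * (s.card)^(s.card - K.card - 1)))]
      rw [Finset.powerset_card_disjiUnion]
      erw [Finset.sum_disjiUnion]
      have hinner : ∀ j ∈ Finset.range (s.card + 1),
          ∑ K ∈ Finset.powersetCard j s,
            (Fintype.card ι)^(K.card) * (if K.card = 0 then 0 else
              if K.card = s.card then 1
              else K.card * (s.card)^(s.card - K.card - 1))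
          = (s.card.choose j) * ((Fintype.card ι)^j * (if j = 0 then 0 else
              if j = s.card then 1 else j * (s.card)^(s.card - j - 1))) := by
        intro j _
        rw [Finset.sum_congr rfl (fun K hK => by
          rw [(Finset.mem_powersetCard.mp hK).2]), Finset.sum_const,
          Finset.card_powersetCard, smul_eq_mul]
      rw [Finset.sum_congr rfl hinner, num_identity s.card (Fintype.card ι) hm]

end Count

end BTreeAux


/-- The number of binary trees with `n` nodes labeled bijectively by `{1,…,n}` such that
every right node has label smaller than its parent's label equals `(n+1)^(n-1)`. -/
theorem card_shi_trees (n : ℕ) :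
    Nat.card {T : BTree // T.labels.Perm (List.range' 1 n) ∧ T.rightDesc}
      = (n + 1) ^ (n - 1) := by
  classical
  have hnodup : (↑(List.range' 1 n) : Multiset ℕ).Nodup := by
    rw [Multiset.coe_nodup]
    exact List.nodup_range' _
  set s : Finset ℕ := ⟨↑(List.range' 1 n), hnodup⟩ with hs
  have hcard : s.card = n := by
    show Multiset.card (↑(List.range' 1 n) : Multiset ℕ) = n
    rw [Multiset.coe_card, List.length_range']
  have E : {T : BTree // T.labels.Perm (List.range' 1 n) ∧ T.rightDesc} ≃ BTreeAux.TS (Fin 1) s := by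
    refine ⟨fun T => ⟨fun _ => T.1, fun _ => T.2.2, ?_⟩,
      fun v => ⟨v.1 0, ?_, v.2.1 0⟩, fun T => rfl, fun v => ?_⟩
    · rw [Fin.sum_univ_one]
      exact Multiset.coe_eq_coe.mpr T.2.1
    · apply Multiset.coe_eq_coe.mp
      have := v.2.2
      rw [Fin.sum_univ_one] at this
      exact this
    · apply Subtype.ext
      funext i
      exact congrArg v.1 (Subsingleton.elim 0 i)
  rw [Nat.card_congr E, BTreeAux.card_TS s.card s le_rfl (Fin 1), hcard, Fintype.card_fin]
  cases n with
  | zero => simp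
  | succ t =>
    rw [if_neg (by omega)]
    ring
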